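/- Let X = Xᵀ and Y = Yᵀ in ℝ^{n×n} satisfy ker R_X ⊆ ker S_X and ker R_Y ⊆ ker S_Y, and let Δ := X − Y. Then ker R_X ⊆ ker (A_Yᵀ Δ B), i.e., A_Yᵀ (X − Y) B v = 0 for every v ∈ ℝ^m with R_X v = 0. -/

import Mathlib

open Matrix

-- The Moore–Penrose pseudoinverse of a real matrix, characterised by the four
-- Penrose equations (it exists and is unique for every real matrix).
open Classical in
noncomputable def mpinv {α β : Type*} [Fintype α] [Fintype β]
    (M : Matrix α β ℝ) : Matrix β α ℝ :=
  if h : ∃ P : Matrix β α ℝ,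
      M * P * M = M ∧ P * M * P = P ∧ (M * P)ᵀ = M * P ∧ (P * M)ᵀ = P * M
  then h.choose else 0

lemma exists_penrose {κ : Type*} [Fintype κ] [DecidableEq κ]
    (M : Matrix κ κ ℝ) (hM : Mᵀ = M) :
    ∃ P : Matrix κ κ ℝ, M * P * M = M ∧ P * M * P = P ∧ (M * P)ᵀ = M * P ∧ (P * M)ᵀ = P * M := by
  have hH : M.IsHermitian := by
    rw [Matrix.IsHermitian]
    ext i j
    simpa using congrFun (congrFun hM i) j
  set V : Matrix κ κ ℝ := (hH.eigenvectorUnitary : Matrix κ κ ℝ) with hV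
  set d : κ → ℝ := hH.eigenvalues with hd
  have hVV : star V * V = 1 := mem_unitaryGroup_iff'.mp hH.eigenvectorUnitary.2
  have hspec : M = V * diagonal d * star V := by
    have := hH.spectral_theorem
    simpa [hV, hd] using this
  have mul_diag : ∀ f g : κ → ℝ, (V * diagonal f * star V) * (V * diagonal g * star V)
      = V * diagonal (fun i => f i * g i) * star V := by
    intro f g
    calc (V * diagonal f * star V) * (V * diagonal g * star V)
        = V * (diagonal f * ((star V * V) * (diagonal g * star V))) := by
          simp only [Matrix.mul_assoc]
      _ = V * diagonal (fun i => f i * g i) * star V := by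
          rw [hVV, one_mul]
          simp only [← Matrix.mul_assoc, diagonal_mul_diagonal]
  have diag_symm : ∀ f : κ → ℝ, (V * diagonal f * star V)ᵀ = V * diagonal f * star V := by
    intro f
    have : star V = Vᵀ := rfl
    rw [this, transpose_mul, transpose_mul, transpose_transpose, diagonal_transpose,
      Matrix.mul_assoc]
  refine ⟨V * diagonal (fun i => (d i)⁻¹) * star V, ?_, ?_, ?_, ?_⟩
  · rw [hspec, mul_diag, mul_diag]
    congr 1
    · congr 1
      ext i
      by_cases h : d i = 0 <;> field_simp [h]
  · rw [hspec, mul_diag, mul_diag]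
    congr 1
    congr 1
    ext i
    by_cases h : d i = 0 <;> field_simp [h]
  · rw [hspec, mul_diag, diag_symm]
  · rw [hspec, mul_diag, diag_symm]

lemma mpinv_spec {κ : Type*} [Fintype κ] [DecidableEq κ]
    (M : Matrix κ κ ℝ) (hM : Mᵀ = M) :
    M * mpinv M * M = M ∧ mpinv M * M * mpinv M = mpinv M ∧
      (M * mpinv M)ᵀ = M * mpinv M ∧ (mpinv M * M)ᵀ = mpinv M * M := by
  have h := exists_penrose M hM
  rw [mpinv, dif_pos h]
  exact h.choose_spec


/-- `R_X = R + BᵀXB`. -/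
noncomputable def RX {ι κ : Type*} [Fintype ι] [Fintype κ]
    (R : Matrix κ κ ℝ) (B : Matrix ι κ ℝ) (X : Matrix ι ι ℝ) : Matrix κ κ ℝ :=
  R + Bᵀ * X * B

/-- `S_X = AᵀXB + S`. -/
noncomputable def SX {ι κ : Type*} [Fintype ι] [Fintype κ]
    (A : Matrix ι ι ℝ) (B S : Matrix ι κ ℝ) (X : Matrix ι ι ℝ) : Matrix ι κ ℝ :=
  Aᵀ * X * B + S

/-- `K_X = R_X† S_Xᵀ`. -/
noncomputable def KX {ι κ : Type*} [Fintype ι] [Fintype κ]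
    (A : Matrix ι ι ℝ) (B S : Matrix ι κ ℝ) (R : Matrix κ κ ℝ) (X : Matrix ι ι ℝ) :
    Matrix κ ι ℝ :=
  mpinv (RX R B X) * (SX A B S X)ᵀ

/-- The closed-loop matrix `A_X = A - B K_X`. -/
noncomputable def AX {ι κ : Type*} [Fintype ι] [Fintype κ]
    (A : Matrix ι ι ℝ) (B S : Matrix ι κ ℝ) (R : Matrix κ κ ℝ) (X : Matrix ι ι ℝ) :
    Matrix ι ι ℝ :=
  A - B * KX A B S R X

/-- The kernel condition `ker R_X ⊆ ker S_X`. -/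
def KerCond {ι κ : Type*} [Fintype ι] [Fintype κ]
    (A : Matrix ι ι ℝ) (B S : Matrix ι κ ℝ) (R : Matrix κ κ ℝ) (X : Matrix ι ι ℝ) : Prop :=
  ∀ v : κ → ℝ, (RX R B X).mulVec v = 0 → (SX A B S X).mulVec v = 0

/-- The Riccati operator `𝔇(X) = X - AᵀXA + S_X R_X† S_Xᵀ - Q`. -/
noncomputable def DOp {ι κ : Type*} [Fintype ι] [Fintype κ]
    (A Q : Matrix ι ι ℝ) (B S : Matrix ι κ ℝ) (R : Matrix κ κ ℝ) (X : Matrix ι ι ℝ) :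
    Matrix ι ι ℝ :=
  X - Aᵀ * X * A + SX A B S X * mpinv (RX R B X) * (SX A B S X)ᵀ - Q

/-- The Riccati map `ℛ(X) = AᵀXA - S_X R_X† S_Xᵀ + Q`. -/
noncomputable def Ricc {ι κ : Type*} [Fintype ι] [Fintype κ]
    (A Q : Matrix ι ι ℝ) (B S : Matrix ι κ ℝ) (R : Matrix κ κ ℝ) (X : Matrix ι ι ℝ) :
    Matrix ι ι ℝ :=
  Aᵀ * X * A - SX A B S X * mpinv (RX R B X) * (SX A B S X)ᵀ + Q

/-- `X` is a symmetric solution of CGDARE(Σ): it is symmetric, satisfies the GDARE and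
the kernel condition `ker R_X ⊆ ker S_X`. -/
def IsCGDARESolution {ι κ : Type*} [Fintype ι] [Fintype κ]
    (A Q : Matrix ι ι ℝ) (B S : Matrix ι κ ℝ) (R : Matrix κ κ ℝ) (X : Matrix ι ι ℝ) : Prop :=
  Xᵀ = X ∧ X = Ricc A Q B S R X ∧ KerCond A B S R X

/-- The matrix `N = [[A, 0, B], [Q, -I, S], [Sᵀ, 0, R]]` of the extended symplectic pencil. -/
noncomputable def Nmat {n m : ℕ} (A Q : Matrix (Fin n) (Fin n) ℝ)
    (B S : Matrix (Fin n) (Fin m) ℝ) (R : Matrix (Fin m) (Fin m) ℝ) :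
    Matrix (Fin n ⊕ (Fin n ⊕ Fin m)) (Fin n ⊕ (Fin n ⊕ Fin m)) ℝ :=
  fromBlocks A (fromCols 0 B) (fromRows Q Sᵀ) (fromBlocks (-1) S 0 R)

/-- The matrix `M = [[I, 0, 0], [0, -Aᵀ, 0], [0, -Bᵀ, 0]]` of the extended symplectic pencil. -/
noncomputable def Mmat {n m : ℕ} (A : Matrix (Fin n) (Fin n) ℝ)
    (B : Matrix (Fin n) (Fin m) ℝ) :
    Matrix (Fin n ⊕ (Fin n ⊕ Fin m)) (Fin n ⊕ (Fin n ⊕ Fin m)) ℝ :=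
  fromBlocks 1 0 0 (fromBlocks (-Aᵀ) 0 (-Bᵀ) 0)

/-- `ker R_X ⊆ ker (A_Yᵀ Δ B)` with `Δ = X - Y`. -/
theorem stmt_7 {n m : ℕ} (hn : 0 < n) (hm : 0 < m)
    (A Q : Matrix (Fin n) (Fin n) ℝ) (B S : Matrix (Fin n) (Fin m) ℝ)
    (R : Matrix (Fin m) (Fin m) ℝ)
    (hPi : (fromBlocks Q S Sᵀ R).PosSemidef)
    (X Y : Matrix (Fin n) (Fin n) ℝ) (hX : Xᵀ = X) (hY : Yᵀ = Y)
    (hkX : KerCond A B S R X) (hkY : KerCond A B S R Y) :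
    ∀ v : Fin m → ℝ, (RX R B X).mulVec v = 0 →
      ((AX A B S R Y)ᵀ * (X - Y) * B).mulVec v = 0 := by
  intro v hv
  have hR : Rᵀ = R := by
    have h := hPi.1
    ext i j
    have := congrFun (congrFun h (Sum.inr i)) (Sum.inr j)
    simpa [conjTranspose_apply, fromBlocks] using this
  have hRY : (RX R B Y)ᵀ = RX R B Y := by
    simp [RX, transpose_add, transpose_mul, hR, hY, Matrix.mul_assoc]
  obtain ⟨h1, h2, h3, h4⟩ := mpinv_spec (RX R B Y) hRY
  set N := mpinv (RX R B Y) with hN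
  have h1t : RX R B Y * Nᵀ * RX R B Y = RX R B Y := by
    have := congrArg Matrix.transpose h1
    simpa [transpose_mul, hRY, Matrix.mul_assoc] using this
  have hSXv : (SX A B S X).mulVec v = 0 := hkX v hv
  set w := v - (Nᵀ * RX R B Y).mulVec v with hw
  have hRw : (RX R B Y).mulVec w = 0 := by
    rw [hw, mulVec_sub, mulVec_mulVec, ← Matrix.mul_assoc, h1t, sub_self]
  have hSw : (SX A B S Y).mulVec w = 0 := hkY w hRw
  have key : (SX A B S Y).mulVec v
      = (SX A B S Y).mulVec ((Nᵀ).mulVec ((RX R B Y).mulVec v)) := by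
    rw [hw, mulVec_sub, sub_eq_zero] at hSw
    rw [hSw, mulVec_mulVec, mulVec_mulVec, mulVec_mulVec, Matrix.mul_assoc]
  have hidentity : ∀ P : Matrix (Fin m) (Fin m) ℝ,
      (A - B * (P * (SX A B S Y)ᵀ))ᵀ * (X - Y) * B
      = (SX A B S X - SX A B S Y)
        - SX A B S Y * Pᵀ * (RX R B X - RX R B Y) := by
    intro P
    simp only [SX, RX, transpose_sub, transpose_mul, transpose_transpose,
      Matrix.sub_mul, Matrix.mul_sub, Matrix.add_mul, Matrix.mul_add, Matrix.mul_assoc]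
    abel
  have hAX : AX A B S R Y = A - B * (N * (SX A B S Y)ᵀ) := by rw [AX, KX, hN]
  rw [hAX, hidentity N]
  simp only [Matrix.sub_mulVec, Matrix.mul_sub, Matrix.sub_mulVec,
    ← Matrix.mulVec_mulVec, hSXv, hv, mulVec_zero, key]
  abel
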